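/- arXiv:1501.05456 — 2 statements merged into one kernel-verified Lean document; each statement's English description precedes it below -/
import Mathlib

section
/- Let n ≥ 2, let p ∈ (0,∞) with p ≠ 1, and fix 0 < a < ∞. There exists a constant D, depending only on n, p and a, with the following property: for every convex body K in ℝ^n with V(K) = ω_n, if x is an interior point of K satisfying ∫_{S^{n−1}} (h_K(u) − ⟨x,u⟩)^{p−1} u dσ(u) = 0 and ∫_{S^{n−1}} (h_K(u) − ⟨x,u⟩)^p dσ(u) ≤ a, then the diameter of K is at most D. -/
open MeasureTheory Metric Filter

noncomputable section

/-- The support function of a set `K ⊆ ℝⁿ`, as a function of `u`: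
`h_K(u) = sup { ⟨y, u⟩ : y ∈ K }`. -/
def suppFn {n : ℕ} (K : Set (EuclideanSpace ℝ (Fin n))) (u : EuclideanSpace ℝ (Fin n)) : ℝ :=
  sSup ((fun y => (inner ℝ y u : ℝ)) '' K)

/-- The spherical Lebesgue measure `σ` on the unit sphere `S^{n-1} ⊆ ℝⁿ`. -/
def sphMeasure (n : ℕ) : Measure (sphere (0 : EuclideanSpace ℝ (Fin n)) 1) :=
  (volume : Measure (EuclideanSpace ℝ (Fin n))).toSphere

set_option maxHeartbeats 1000000

open Set
open scoped Pointwise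

namespace Stmt6

variable {n : ℕ}

local notation "E" => EuclideanSpace ℝ (Fin n)

instance : IsFiniteMeasure (sphMeasure n) := by
  unfold sphMeasure; infer_instance

/-- map induced on the unit sphere by a linear isometry equivalence -/
def sMap (e : E ≃ₗᵢ[ℝ] E) (u : sphere (0 : E) 1) : sphere (0 : E) 1 :=
  ⟨e u, by
    have h : ‖(u : E)‖ = 1 := mem_sphere_zero_iff_norm.mp u.2
    simp [mem_sphere_zero_iff_norm, h]⟩

lemma continuous_sMap (e : E ≃ₗᵢ[ℝ] E) : Continuous (sMap e) :=
  Continuous.subtype_mk (e.continuous.comp continuous_subtype_val) _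

lemma sphMeasure_map (e : E ≃ₗᵢ[ℝ] E) :
    (sphMeasure n).map (sMap e) = sphMeasure n := by
  apply Measure.ext
  intro s hs
  rw [Measure.map_apply (continuous_sMap e).measurable hs]
  show (volume : Measure E).toSphere _ = (volume : Measure E).toSphere s
  rw [Measure.toSphere_apply' _ ((continuous_sMap e).measurable hs),
    Measure.toSphere_apply' _ hs]
  congr 1
  have h1 : (Subtype.val '' (sMap e ⁻¹' s)) = e ⁻¹' (Subtype.val '' s) := by
    ext y
    constructor
    · rintro ⟨u, hu, rfl⟩
      exact ⟨sMap e u, hu, rfl⟩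
    · rintro ⟨w, hw, hew⟩
      have hy : ‖y‖ = 1 := by
        have : ‖(w : E)‖ = 1 := mem_sphere_zero_iff_norm.mp w.2
        rw [← e.norm_map y, ← hew, this]
      refine ⟨⟨y, mem_sphere_zero_iff_norm.mpr hy⟩, ?_, rfl⟩
      show sMap e ⟨y, _⟩ ∈ s
      have : sMap e ⟨y, mem_sphere_zero_iff_norm.mpr hy⟩ = w := Subtype.ext hew.symm
      rw [this]; exact hw
  have h2 : Ioo (0:ℝ) 1 • (e ⁻¹' (Subtype.val '' s)) = e ⁻¹' (Ioo (0:ℝ) 1 • (Subtype.val '' s)) := by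
    ext z
    constructor
    · rintro ⟨r, hr, w, hw, rfl⟩
      exact ⟨r, hr, e w, hw, (e.map_smul r w).symm⟩
    · rintro ⟨r, hr, w, hw, hz⟩
      refine ⟨r, hr, e.symm w, by simpa using hw, ?_⟩
      apply e.injective
      rw [← hz, e.map_smul]
      simp
  rw [h1, h2]
  have h3 : ∀ B : Set E, volume (e ⁻¹' B) = volume B := by
    intro B
    let me : E ≃ᵐ E := e.toHomeomorph.toMeasurableEquiv
    have hme : (⇑me : E → E) = ⇑e := rfl
    have : volume (⇑me ⁻¹' B) = (volume.map me) B := (MeasurableEquiv.map_apply me B).symm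
    rw [hme] at this
    rw [this]
    congr 1
    exact e.measurePreserving.map_eq
  exact h3 _

lemma integral_sMap (e : E ≃ₗᵢ[ℝ] E) {φ : sphere (0 : E) 1 → ℝ} (hφ : Continuous φ) :
    ∫ u, φ (sMap e u) ∂(sphMeasure n) = ∫ u, φ u ∂(sphMeasure n) := by
  conv_rhs => rw [← sphMeasure_map e]
  rw [integral_map (continuous_sMap e).aemeasurable]
  rw [sphMeasure_map e]
  exact hφ.aestronglyMeasurable


lemma integrable_cont {X : Type*} [NormedAddCommGroup X] {φ : sphere (0 : E) 1 → X}
    (hφ : Continuous φ) : Integrable φ (sphMeasure n) := by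
  have hcs : HasCompactSupport φ :=
    IsCompact.of_isClosed_subset isCompact_univ (isClosed_tsupport φ) (Set.subset_univ _)
  exact hφ.integrable_of_hasCompactSupport hcs

lemma integral_inner_sq_eq {v w : E} (hv : ‖v‖ = 1) (hw : ‖w‖ = 1) :
    ∫ u : sphere (0:E) 1, (inner ℝ v (u:E) : ℝ)^2 ∂(sphMeasure n)
      = ∫ u : sphere (0:E) 1, (inner ℝ w (u:E) : ℝ)^2 ∂(sphMeasure n) := by
  set e := Submodule.reflection (ℝ ∙ (v - w))ᗮ with he
  have hev : e v = w := Submodule.reflection_sub (by rw [hv, hw])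
  have hco : Continuous (fun u : sphere (0:E) 1 => (inner ℝ w (u:E) : ℝ)^2) :=
    (Continuous.inner continuous_const continuous_subtype_val).pow 2
  have h1 : ∀ u : sphere (0:E) 1,
      (inner ℝ w ((sMap e u : sphere (0:E) 1) : E) : ℝ)^2 = (inner ℝ v (u:E) : ℝ)^2 := by
    intro u
    have : ((sMap e u : sphere (0:E) 1) : E) = e (u:E) := rfl
    rw [this, ← hev, e.inner_map_map]
  calc ∫ u : sphere (0:E) 1, (inner ℝ v (u:E) : ℝ)^2 ∂(sphMeasure n)
      = ∫ u : sphere (0:E) 1, (inner ℝ w ((sMap e u : sphere (0:E) 1) : E) : ℝ)^2 ∂(sphMeasure n) := by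
        congr 1; funext u; rw [h1]
    _ = _ := integral_sMap e hco

lemma sphMeasure_univ_pos (hn : 0 < n) :
    0 < ((sphMeasure n) Set.univ).toReal := by
  have h : (sphMeasure n) Set.univ
      = (Module.finrank ℝ E) * volume (ball (0:E) 1) := by
    unfold sphMeasure
    exact Measure.toSphere_apply_univ _
  rw [h]
  have hd : (Module.finrank ℝ E) = n := finrank_euclideanSpace_fin
  have hb0 : volume (ball (0:E) 1) ≠ 0 := (measure_ball_pos volume 0 one_pos).ne'
  have hbt : volume (ball (0:E) 1) ≠ ⊤ := measure_ball_lt_top.ne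
  apply ENNReal.toReal_pos
  · simp only [ne_eq, mul_eq_zero, not_or]
    exact ⟨by simp [hd, hn.ne'], hb0⟩
  · exact ENNReal.mul_ne_top (by simp) hbt

lemma sum_coord_sq (u : sphere (0:E) 1) : ∑ i : Fin n, ((u:E) i)^2 = 1 := by
  have h : ‖(u:E)‖ = 1 := mem_sphere_zero_iff_norm.mp u.2
  have h1 := EuclideanSpace.norm_eq (u:E)
  rw [h] at h1
  have h2 : Real.sqrt (∑ i, ‖(u:E) i‖^2) = 1 := h1.symm
  have h3 := congrArg (fun t : ℝ => t^2) h2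
  simp only [Real.sq_sqrt (Finset.sum_nonneg fun i _ => sq_nonneg _), one_pow] at h3
  simpa [Real.norm_eq_abs, sq_abs] using h3

lemma n_mul_integral_inner_sq (hn : 0 < n) {v : E} (hv : ‖v‖ = 1) :
    (n:ℝ) * ∫ u : sphere (0:E) 1, (inner ℝ v (u:E) : ℝ)^2 ∂(sphMeasure n)
      = ((sphMeasure n) Set.univ).toReal := by
  classical
  have hsingle : ∀ i : Fin n, ‖(EuclideanSpace.single i (1:ℝ) : E)‖ = 1 := by
    intro i; rw [EuclideanSpace.norm_single]; norm_num
  have hsum := integral_finset_sum (μ := sphMeasure n) Finset.univ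
      (f := fun (i : Fin n) (u : sphere (0:E) 1) =>
        (inner ℝ (EuclideanSpace.single i (1:ℝ)) (u:E) : ℝ)^2)
      (fun i _ => integrable_cont
        ((Continuous.inner continuous_const continuous_subtype_val).pow 2))
  have hpt : ∀ u : sphere (0:E) 1,
      (∑ i : Fin n, (inner ℝ (EuclideanSpace.single i (1:ℝ)) (u:E) : ℝ)^2) = 1 := by
    intro u
    have hi : ∀ i : Fin n, (inner ℝ (EuclideanSpace.single i (1:ℝ)) (u:E) : ℝ) = (u:E) i := by
      intro i; rw [EuclideanSpace.inner_single_left]; simp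
    simp_rw [hi]
    exact sum_coord_sq u
  have hL : (∫ u : sphere (0:E) 1,
      (∑ i : Fin n, (inner ℝ (EuclideanSpace.single i (1:ℝ)) (u:E) : ℝ)^2) ∂(sphMeasure n))
      = ((sphMeasure n) Set.univ).toReal := by
    rw [show (fun u : sphere (0:E) 1 =>
      (∑ i : Fin n, (inner ℝ (EuclideanSpace.single i (1:ℝ)) (u:E) : ℝ)^2)) = fun _ => (1:ℝ)
      from funext fun u => hpt u]
    simp [integral_const, measureReal_def]
  have hR : ∀ i : Fin n,
      (∫ u : sphere (0:E) 1, (inner ℝ (EuclideanSpace.single i (1:ℝ)) (u:E) : ℝ)^2 ∂(sphMeasure n))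
        = ∫ u : sphere (0:E) 1, (inner ℝ v (u:E) : ℝ)^2 ∂(sphMeasure n) :=
    fun i => integral_inner_sq_eq (hsingle i) hv
  rw [hL] at hsum
  rw [Finset.sum_congr rfl (fun i _ => hR i), Finset.sum_const, Finset.card_univ,
    Fintype.card_fin, nsmul_eq_mul] at hsum
  exact hsum.symm

lemma integral_inner_sq_pos (hn : 0 < n) {v : E} (hv : ‖v‖ = 1) :
    0 < ∫ u : sphere (0:E) 1, (inner ℝ v (u:E) : ℝ)^2 ∂(sphMeasure n) := by
  have h := n_mul_integral_inner_sq hn hv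
  have hS := sphMeasure_univ_pos (n := n) hn
  nlinarith [hS, sq_nonneg ((n:ℝ))]

lemma inner_le_suppFn {K : Set E} (hK : IsCompact K) {z : E} (hz : z ∈ K) (u : E) :
    (inner ℝ z u : ℝ) ≤ suppFn K u :=
  le_csSup ((hK.image (Continuous.inner continuous_id continuous_const)).bddAbove) ⟨z, hz, rfl⟩

lemma suppFn_le {K : Set E} (hne : K.Nonempty) {u : E} {M : ℝ}
    (h : ∀ z ∈ K, (inner ℝ z u : ℝ) ≤ M) : suppFn K u ≤ M :=
  csSup_le (hne.image _) (by rintro y ⟨z, hz, rfl⟩; exact h z hz)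

lemma continuous_suppFn {K : Set E} (hK : IsCompact K) (hne : K.Nonempty) :
    Continuous (suppFn K) := by
  obtain ⟨M, hM⟩ := hK.isBounded.exists_norm_le
  obtain ⟨z0, hz0⟩ := id hne
  have hM0 : 0 ≤ M := le_trans (norm_nonneg z0) (hM z0 hz0)
  have key : ∀ u u' : E, suppFn K u ≤ suppFn K u' + M * ‖u - u'‖ := by
    intro u u'
    apply suppFn_le hne
    intro z hz
    have h1 : (inner ℝ z u : ℝ) = (inner ℝ z u' : ℝ) + (inner ℝ z (u - u') : ℝ) := by
      rw [← inner_add_right]; congr 1; abel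
    rw [h1]
    refine add_le_add (inner_le_suppFn hK hz u') ?_
    exact le_trans (real_inner_le_norm _ _)
      (mul_le_mul_of_nonneg_right (hM z hz) (norm_nonneg _))
  refine LipschitzWith.continuous (K := M.toNNReal) ?_
  rw [lipschitzWith_iff_dist_le_mul]
  intro u u'
  rw [Real.dist_eq, Real.coe_toNNReal _ hM0, dist_eq_norm]
  rw [abs_sub_le_iff]
  constructor
  · have := key u u'; linarith
  · have := key u' u; rw [norm_sub_rev] at this; linarith

lemma rpow_two_add_le {x y s : ℝ} (hx : 0 ≤ x) (hy : 0 ≤ y) (hs : 1 ≤ s) :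
    (x + y) ^ s ≤ 2 ^ (s - 1) * (x ^ s + y ^ s) := by
  have h := NNReal.rpow_add_le_mul_rpow_add_rpow x.toNNReal y.toNNReal hs
  have h2 := NNReal.coe_le_coe.mpr h
  simpa [NNReal.coe_rpow, Real.coe_toNNReal x hx, Real.coe_toNNReal y hy] using h2

lemma le_rpow_bound {R p b κ : ℝ} (hR : 0 < R) (hp : 0 < p) (hκ : 0 < κ)
    (h : R ^ p * κ ≤ b) : R ≤ (b / κ) ^ (p⁻¹) := by
  have h1 : R ^ p ≤ b / κ := (le_div_iff₀ hκ).mpr h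
  calc R = (R ^ p) ^ p⁻¹ := (Real.rpow_rpow_inv hR.le hp.ne').symm
    _ ≤ (b / κ) ^ p⁻¹ := Real.rpow_le_rpow (Real.rpow_nonneg hR.le p) h1 (by positivity)

end Stmt6

open Stmt6

/-- for `n ≥ 2`, `p ∈ (0,∞)`, `p ≠ 1` and `0 < a < ∞`, there is `D = D(n,p,a)`
such that every convex body `K` with `V(K) = ω_n` admitting an interior point `x` with
`∫ (h_K(u) - ⟨x,u⟩)^(p-1) u dσ(u) = 0` and `∫ (h_K(u) - ⟨x,u⟩)^p dσ(u) ≤ a`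
has diameter at most `D`. -/
theorem statement_6 {n : ℕ} (hn : 2 ≤ n) (p : ℝ) (hp : 0 < p) (hp1 : p ≠ 1) (a : ℝ) (ha : 0 < a) :
    ∃ D : ℝ, ∀ (K : Set (EuclideanSpace ℝ (Fin n))),
      IsCompact K → Convex ℝ K → (interior K).Nonempty → volume K = volume (ball (0 : EuclideanSpace ℝ (Fin n)) 1) →
      ∀ x ∈ interior K,
        (∫ u : sphere (0 : EuclideanSpace ℝ (Fin n)) 1, ((suppFn K u - (inner ℝ x (u : EuclideanSpace ℝ (Fin n)) : ℝ)) ^ (p - 1)) • (u : EuclideanSpace ℝ (Fin n)) ∂(sphMeasure n)) = 0 →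
        (∫ u : sphere (0 : EuclideanSpace ℝ (Fin n)) 1, (suppFn K u - (inner ℝ x (u : EuclideanSpace ℝ (Fin n)) : ℝ)) ^ (p) ∂(sphMeasure n)) ≤ a →
        Metric.diam K ≤ D := by
  classical
  have hn0 : 0 < n := by omega
  set v0 : EuclideanSpace ℝ (Fin n) := EuclideanSpace.single (⟨0, hn0⟩ : Fin n) (1:ℝ) with hv0def
  have hv0 : ‖v0‖ = 1 := by rw [hv0def, EuclideanSpace.norm_single]; norm_num
  set c0 : ℝ := ∫ u : sphere (0 : EuclideanSpace ℝ (Fin n)) 1,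
      (inner ℝ v0 (u : EuclideanSpace ℝ (Fin n)) : ℝ)^2 ∂(sphMeasure n) with hc0def
  have hc0pos : 0 < c0 := integral_inner_sq_pos hn0 hv0
  set S : ℝ := ((sphMeasure n) Set.univ).toReal with hSdef
  have hSpos : 0 < S := sphMeasure_univ_pos hn0
  set t : ℝ := Real.sqrt (c0 / (2*S)) with htdef
  have htpos : 0 < t := Real.sqrt_pos.mpr (by positivity)
  have ht2 : t^2 = c0/(2*S) := Real.sq_sqrt (by positivity)
  set κ : ℝ := 2 ^ ((2:ℝ) - p) * (t ^ (p-1) * t * (c0/2)) with hκdef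
  have hκpos : 0 < κ := by
    apply mul_pos (Real.rpow_pos_of_pos two_pos _)
    exact mul_pos (mul_pos (Real.rpow_pos_of_pos htpos _) htpos) (by positivity)
  set d1 : ℝ := ((2*a)/c0) ^ (p⁻¹) with hd1def
  set d2 : ℝ := ((2*a)/(c0/2)) ^ (p⁻¹) with hd2def
  set d3 : ℝ := ((4*a)/κ) ^ (p⁻¹) with hd3def
  refine ⟨max (max d1 d2) d3, ?_⟩
  intro K hKc _hKconv hKint _hKvol x hx hcent hLp
  have hxK : x ∈ K := interior_subset hx
  have hKne : K.Nonempty := ⟨x, hxK⟩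
  obtain ⟨ε, hε, hball⟩ := Metric.isOpen_iff.mp isOpen_interior x hx
  have hballK : ball x ε ⊆ K := hball.trans interior_subset
  set R : ℝ := Metric.diam K with hRdef
  have hmemhalf : ∀ w : EuclideanSpace ℝ (Fin n), ‖w‖ = 1 → x + (ε/2) • w ∈ K := by
    intro w hw
    apply hballK
    rw [mem_ball_iff_norm, add_sub_cancel_left, norm_smul, hw, mul_one, Real.norm_eq_abs,
      abs_of_pos (by positivity)]
    linarith
  have hRpos : 0 < R := by
    have h1 : x + (ε/2) • v0 ∈ K := hmemhalf v0 hv0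
    have h2 := dist_le_diam_of_mem hKc.isBounded h1 hxK
    rw [dist_eq_norm, add_sub_cancel_left, norm_smul, hv0, mul_one, Real.norm_eq_abs,
      abs_of_pos (by positivity)] at h2
    linarith
  -- the diameter is attained
  obtain ⟨q, hqK, hqmax⟩ := (hKc.prod hKc).exists_isMaxOn
    (⟨(x,x), Set.mk_mem_prod hxK hxK⟩ : (K ×ˢ K).Nonempty)
    ((continuous_fst.dist continuous_snd).continuousOn)
  rw [isMaxOn_iff] at hqmax
  set z₁ : EuclideanSpace ℝ (Fin n) := q.1 with hz₁def
  set z₂ : EuclideanSpace ℝ (Fin n) := q.2 with hz₂def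
  have hz₁K : z₁ ∈ K := (Set.mem_prod.mp hqK).1
  have hz₂K : z₂ ∈ K := (Set.mem_prod.mp hqK).2
  have hdiam : dist z₁ z₂ = R := by
    apply le_antisymm (dist_le_diam_of_mem hKc.isBounded hz₁K hz₂K)
    apply Metric.diam_le_of_forall_dist_le dist_nonneg
    intro y hy y' hy'
    exact hqmax (y, y') (Set.mk_mem_prod hy hy')
  set v : EuclideanSpace ℝ (Fin n) := R⁻¹ • (z₂ - z₁) with hvdef
  have hz21 : ‖z₂ - z₁‖ = R := by rw [← dist_eq_norm, dist_comm]; exact hdiam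
  have hv : ‖v‖ = 1 := by
    rw [hvdef, norm_smul, hz21, Real.norm_eq_abs, abs_of_pos (inv_pos.mpr hRpos),
      inv_mul_cancel₀ hRpos.ne']
  have hRv : R • v = z₂ - z₁ := by rw [hvdef, smul_inv_smul₀ hRpos.ne']
  -- the functions f, g, F on the sphere
  set f : sphere (0 : EuclideanSpace ℝ (Fin n)) 1 → ℝ :=
    fun u => suppFn K u - (inner ℝ x (u : EuclideanSpace ℝ (Fin n)) : ℝ) with hfdef
  set g : sphere (0 : EuclideanSpace ℝ (Fin n)) 1 → ℝ :=
    fun u => |(inner ℝ v (u : EuclideanSpace ℝ (Fin n)) : ℝ)| with hgdef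
  set F : sphere (0 : EuclideanSpace ℝ (Fin n)) 1 → ℝ := fun u => f u ^ (p - 1) with hFdef
  have hfcont : Continuous f := ((continuous_suppFn hKc hKne).comp continuous_subtype_val).sub
    (Continuous.inner continuous_const continuous_subtype_val)
  have hflb : ∀ u, ε/2 ≤ f u := by
    intro u
    have hu1 : ‖(u : EuclideanSpace ℝ (Fin n))‖ = 1 := mem_sphere_zero_iff_norm.mp u.2
    have hm := hmemhalf _ hu1
    have h1 := inner_le_suppFn hKc hm (u : EuclideanSpace ℝ (Fin n))
    rw [inner_add_left, real_inner_smul_left] at h1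
    have h2 : (inner ℝ (u : EuclideanSpace ℝ (Fin n)) (u : EuclideanSpace ℝ (Fin n)) : ℝ) = 1 := by
      rw [real_inner_self_eq_norm_mul_norm, hu1]; ring
    rw [h2, mul_one] at h1
    show ε/2 ≤ suppFn K u - (inner ℝ x (u : EuclideanSpace ℝ (Fin n)) : ℝ)
    linarith
  have hfpos : ∀ u, 0 < f u := fun u => lt_of_lt_of_le (by positivity) (hflb u)
  have hfub : ∀ u, f u ≤ R := by
    intro u
    have hu1 : ‖(u : EuclideanSpace ℝ (Fin n))‖ = 1 := mem_sphere_zero_iff_norm.mp u.2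
    have h1 : suppFn K (u : EuclideanSpace ℝ (Fin n))
        ≤ (inner ℝ x (u : EuclideanSpace ℝ (Fin n)) : ℝ) + R := by
      apply suppFn_le hKne
      intro z hz
      have h2 : (inner ℝ (z - x) (u : EuclideanSpace ℝ (Fin n)) : ℝ)
          = inner ℝ z (u : EuclideanSpace ℝ (Fin n)) - inner ℝ x (u : EuclideanSpace ℝ (Fin n)) :=
        inner_sub_left _ _ _
      have h3 : (inner ℝ (z - x) (u : EuclideanSpace ℝ (Fin n)) : ℝ) ≤ R := by
        refine le_trans (real_inner_le_norm _ _) ?_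
        rw [hu1, mul_one, ← dist_eq_norm]
        exact dist_le_diam_of_mem hKc.isBounded hz hxK
      linarith
    show suppFn K u - (inner ℝ x (u : EuclideanSpace ℝ (Fin n)) : ℝ) ≤ R
    linarith
  have hgcont : Continuous g := (Continuous.inner continuous_const continuous_subtype_val).abs
  have hg0 : ∀ u, 0 ≤ g u := fun u => abs_nonneg _
  have hg1 : ∀ u, g u ≤ 1 := by
    intro u
    have hu1 : ‖(u : EuclideanSpace ℝ (Fin n))‖ = 1 := mem_sphere_zero_iff_norm.mp u.2
    calc g u ≤ ‖v‖ * ‖(u : EuclideanSpace ℝ (Fin n))‖ := abs_real_inner_le_norm _ _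
      _ = 1 := by rw [hv, hu1, mul_one]
  have hgsq : ∫ u, (g u)^2 ∂(sphMeasure n) = c0 := by
    have h1 : (fun u : sphere (0 : EuclideanSpace ℝ (Fin n)) 1 => (g u)^2)
        = fun u : sphere (0 : EuclideanSpace ℝ (Fin n)) 1 =>
            (inner ℝ v (u : EuclideanSpace ℝ (Fin n)) : ℝ)^2 := by
      funext u; exact sq_abs _
    rw [h1, hc0def]
    exact integral_inner_sq_eq hv hv0
  have hFcont : Continuous F := hfcont.rpow_const (fun u => Or.inl (hfpos u).ne')
  have hF0 : ∀ u, 0 ≤ F u := fun u => (Real.rpow_pos_of_pos (hfpos u) _).le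
  -- centering
  have hIntVec : Integrable (fun u : sphere (0 : EuclideanSpace ℝ (Fin n)) 1 =>
      F u • (u : EuclideanSpace ℝ (Fin n))) (sphMeasure n) :=
    integrable_cont (hFcont.smul continuous_subtype_val)
  have hvec0 : (∫ u : sphere (0 : EuclideanSpace ℝ (Fin n)) 1,
      F u • (u : EuclideanSpace ℝ (Fin n)) ∂(sphMeasure n)) = 0 := hcent
  have hzero : ∀ w : EuclideanSpace ℝ (Fin n),
      ∫ u : sphere (0 : EuclideanSpace ℝ (Fin n)) 1,
        F u * (inner ℝ w (u : EuclideanSpace ℝ (Fin n)) : ℝ) ∂(sphMeasure n) = 0 := by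
    intro w
    have h1 := integral_inner (𝕜 := ℝ) hIntVec w
    rw [hvec0, inner_zero_right] at h1
    rw [← h1]
    congr 1
    funext u
    rw [real_inner_smul_right]
  -- the key upper bound, for any base point y ∈ K
  have hIntF_supp : ∀ y : EuclideanSpace ℝ (Fin n),
      Integrable (fun u : sphere (0 : EuclideanSpace ℝ (Fin n)) 1 =>
        F u * (suppFn K u - (inner ℝ y (u : EuclideanSpace ℝ (Fin n)) : ℝ))) (sphMeasure n) :=
    fun y => integrable_cont (hFcont.mul
      (((continuous_suppFn hKc hKne).comp continuous_subtype_val).sub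
        (Continuous.inner continuous_const continuous_subtype_val)))
  have hIntfp : Integrable (fun u : sphere (0 : EuclideanSpace ℝ (Fin n)) 1 => f u ^ p)
      (sphMeasure n) :=
    integrable_cont (hfcont.rpow_const fun u => Or.inl (hfpos u).ne')
  have hkey : ∀ y ∈ K, (∫ u : sphere (0 : EuclideanSpace ℝ (Fin n)) 1,
      F u * (suppFn K u - (inner ℝ y (u : EuclideanSpace ℝ (Fin n)) : ℝ)) ∂(sphMeasure n)) ≤ a := by
    intro y hy
    have hsplit : ∀ u : sphere (0 : EuclideanSpace ℝ (Fin n)) 1,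
        F u * (suppFn K u - (inner ℝ y (u : EuclideanSpace ℝ (Fin n)) : ℝ))
          = f u ^ p + F u * (inner ℝ (x - y) (u : EuclideanSpace ℝ (Fin n)) : ℝ) := by
      intro u
      have h1 : (inner ℝ (x - y) (u : EuclideanSpace ℝ (Fin n)) : ℝ)
          = inner ℝ x (u : EuclideanSpace ℝ (Fin n)) - inner ℝ y (u : EuclideanSpace ℝ (Fin n)) :=
        inner_sub_left _ _ _
      have h2 : F u * f u = f u ^ p := by
        show f u ^ (p-1) * f u = f u ^ p
        calc f u ^ (p-1) * f u = f u ^ (p-1) * f u ^ (1:ℝ) := by rw [Real.rpow_one]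
          _ = f u ^ (p-1+1) := (Real.rpow_add (hfpos u) _ _).symm
          _ = f u ^ p := by ring_nf
      have h3 : F u * (suppFn K u - (inner ℝ y (u : EuclideanSpace ℝ (Fin n)) : ℝ))
          = F u * f u + F u * ((inner ℝ x (u : EuclideanSpace ℝ (Fin n)) : ℝ)
            - inner ℝ y (u : EuclideanSpace ℝ (Fin n))) := by
        have hfu : f u = suppFn K u - (inner ℝ x (u : EuclideanSpace ℝ (Fin n)) : ℝ) := rfl
        rw [hfu]; ring
      rw [h3, h2, h1]
    calc (∫ u : sphere (0 : EuclideanSpace ℝ (Fin n)) 1,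
        F u * (suppFn K u - (inner ℝ y (u : EuclideanSpace ℝ (Fin n)) : ℝ)) ∂(sphMeasure n))
        = ∫ u : sphere (0 : EuclideanSpace ℝ (Fin n)) 1,
            (f u ^ p + F u * (inner ℝ (x - y) (u : EuclideanSpace ℝ (Fin n)) : ℝ)) ∂(sphMeasure n) := by
          congr 1; funext u; exact hsplit u
      _ = (∫ u : sphere (0 : EuclideanSpace ℝ (Fin n)) 1, f u ^ p ∂(sphMeasure n))
          + ∫ u : sphere (0 : EuclideanSpace ℝ (Fin n)) 1,
              F u * (inner ℝ (x - y) (u : EuclideanSpace ℝ (Fin n)) : ℝ) ∂(sphMeasure n) :=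
        integral_add hIntfp (integrable_cont (hFcont.mul
          (Continuous.inner continuous_const continuous_subtype_val)))
      _ = ∫ u : sphere (0 : EuclideanSpace ℝ (Fin n)) 1, f u ^ p ∂(sphMeasure n) := by
          rw [hzero (x - y), add_zero]
      _ ≤ a := hLp
  -- the two-endpoint inequality
  have hpt : ∀ u : sphere (0 : EuclideanSpace ℝ (Fin n)) 1,
      R * g u ≤ (suppFn K u - (inner ℝ z₁ (u : EuclideanSpace ℝ (Fin n)) : ℝ))
        + (suppFn K u - (inner ℝ z₂ (u : EuclideanSpace ℝ (Fin n)) : ℝ)) := by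
    intro u
    have h1 := inner_le_suppFn hKc hz₁K (u : EuclideanSpace ℝ (Fin n))
    have h2 := inner_le_suppFn hKc hz₂K (u : EuclideanSpace ℝ (Fin n))
    have h3 : R * (inner ℝ v (u : EuclideanSpace ℝ (Fin n)) : ℝ)
        = inner ℝ z₂ (u : EuclideanSpace ℝ (Fin n)) - inner ℝ z₁ (u : EuclideanSpace ℝ (Fin n)) := by
      rw [← real_inner_smul_left, hRv, inner_sub_left]
    have h4 : R * g u = |R * (inner ℝ v (u : EuclideanSpace ℝ (Fin n)) : ℝ)| := by
      show R * |(inner ℝ v (u : EuclideanSpace ℝ (Fin n)) : ℝ)| = _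
      rw [abs_mul, abs_of_pos hRpos]
    rw [h4, h3]
    rw [abs_le]
    constructor <;> linarith
  -- J := ∫ F g
  set J : ℝ := ∫ u : sphere (0 : EuclideanSpace ℝ (Fin n)) 1, F u * g u ∂(sphMeasure n) with hJdef
  have hIntFg : Integrable (fun u : sphere (0 : EuclideanSpace ℝ (Fin n)) 1 => F u * g u)
      (sphMeasure n) := integrable_cont (hFcont.mul hgcont)
  have hRJ : R * J ≤ 2 * a := by
    have hIgrand : Integrable (fun u : sphere (0 : EuclideanSpace ℝ (Fin n)) 1
        => F u * (R * g u)) (sphMeasure n) :=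
      integrable_cont (hFcont.mul (continuous_const.mul hgcont))
    have hmono : (∫ u : sphere (0 : EuclideanSpace ℝ (Fin n)) 1, F u * (R * g u) ∂(sphMeasure n))
        ≤ ∫ u : sphere (0 : EuclideanSpace ℝ (Fin n)) 1,
          (F u * (suppFn K u - (inner ℝ z₁ (u : EuclideanSpace ℝ (Fin n)) : ℝ))
            + F u * (suppFn K u - (inner ℝ z₂ (u : EuclideanSpace ℝ (Fin n)) : ℝ))) ∂(sphMeasure n) := by
      apply integral_mono hIgrand ((hIntF_supp z₁).add (hIntF_supp z₂))
      intro u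
      have h5 := hpt u
      have h6 := hF0 u
      show F u * (R * g u) ≤ _
      calc F u * (R * g u)
          ≤ F u * ((suppFn K u - (inner ℝ z₁ (u : EuclideanSpace ℝ (Fin n)) : ℝ))
            + (suppFn K u - (inner ℝ z₂ (u : EuclideanSpace ℝ (Fin n)) : ℝ))) :=
            mul_le_mul_of_nonneg_left h5 h6
        _ = _ := mul_add _ _ _
    rw [integral_add (hIntF_supp z₁) (hIntF_supp z₂)] at hmono
    have h7 : (∫ u : sphere (0 : EuclideanSpace ℝ (Fin n)) 1,
        F u * (R * g u) ∂(sphMeasure n)) = R * J := by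
      rw [hJdef, ← integral_const_mul _ _]
      congr 1; funext u; ring
    rw [h7] at hmono
    have h8 := hkey z₁ hz₁K
    have h9 := hkey z₂ hz₂K
    linarith
  -- negation symmetry
  set nm : sphere (0 : EuclideanSpace ℝ (Fin n)) 1 → sphere (0 : EuclideanSpace ℝ (Fin n)) 1 :=
    Stmt6.sMap (LinearIsometryEquiv.neg ℝ) with hnmdef
  have hcontnm : Continuous nm := continuous_sMap _
  have hsymm : ∀ φ : sphere (0 : EuclideanSpace ℝ (Fin n)) 1 → ℝ, Continuous φ →
      (∫ u, φ (nm u) ∂(sphMeasure n)) = ∫ u, φ u ∂(sphMeasure n) :=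
    fun φ hφ => integral_sMap _ hφ
  have hnmcoe : ∀ u : sphere (0 : EuclideanSpace ℝ (Fin n)) 1,
      ((nm u : sphere (0 : EuclideanSpace ℝ (Fin n)) 1) : EuclideanSpace ℝ (Fin n))
        = -(u : EuclideanSpace ℝ (Fin n)) := fun u => rfl
  have hgneg : ∀ u, g (nm u) = g u := by
    intro u
    show |(inner ℝ v ((nm u : sphere (0 : EuclideanSpace ℝ (Fin n)) 1)
      : EuclideanSpace ℝ (Fin n)) : ℝ)| = _
    rw [hnmcoe, inner_neg_right, abs_neg]
  have hfnm : ∀ u : sphere (0 : EuclideanSpace ℝ (Fin n)) 1,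
      f (nm u) = suppFn K (-(u : EuclideanSpace ℝ (Fin n)))
        + (inner ℝ x (u : EuclideanSpace ℝ (Fin n)) : ℝ) := by
    intro u
    show suppFn K ((nm u : sphere (0 : EuclideanSpace ℝ (Fin n)) 1) : EuclideanSpace ℝ (Fin n))
      - (inner ℝ x ((nm u : sphere (0 : EuclideanSpace ℝ (Fin n)) 1) : EuclideanSpace ℝ (Fin n)) : ℝ) = _
    rw [hnmcoe, inner_neg_right]
    ring
  have hfneglb : ∀ u : sphere (0 : EuclideanSpace ℝ (Fin n)) 1, R * g u ≤ f u + f (nm u) := by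
    intro u
    have h1 := inner_le_suppFn hKc hz₁K (u : EuclideanSpace ℝ (Fin n))
    have h2 := inner_le_suppFn hKc hz₂K (u : EuclideanSpace ℝ (Fin n))
    have h3 := inner_le_suppFn hKc hz₁K (-(u : EuclideanSpace ℝ (Fin n)))
    have h4 := inner_le_suppFn hKc hz₂K (-(u : EuclideanSpace ℝ (Fin n)))
    rw [inner_neg_right] at h3 h4
    have h5 : R * g u = |(inner ℝ z₂ (u : EuclideanSpace ℝ (Fin n)) : ℝ)
        - inner ℝ z₁ (u : EuclideanSpace ℝ (Fin n))| := by
      have h6 : R * (inner ℝ v (u : EuclideanSpace ℝ (Fin n)) : ℝ)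
          = inner ℝ z₂ (u : EuclideanSpace ℝ (Fin n)) - inner ℝ z₁ (u : EuclideanSpace ℝ (Fin n)) := by
        rw [← real_inner_smul_left, hRv, inner_sub_left]
      rw [← h6]
      show R * |(inner ℝ v (u : EuclideanSpace ℝ (Fin n)) : ℝ)| = _
      rw [abs_mul, abs_of_pos hRpos]
    have hfu : f u = suppFn K (u : EuclideanSpace ℝ (Fin n))
        - (inner ℝ x (u : EuclideanSpace ℝ (Fin n)) : ℝ) := rfl
    have hfnu := hfnm u
    rw [h5, abs_le]
    constructor <;> linarith
  -- case analysis on p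
  have hfinal : R ≤ max (max d1 d2) d3 := by
    rcases lt_or_ge p 1 with hplt | hpge
    · -- case 0 < p < 1
      have hFlb : ∀ u : sphere (0 : EuclideanSpace ℝ (Fin n)) 1,
          R ^ (p-1) * g u ≤ F u * g u := by
        intro u
        apply mul_le_mul_of_nonneg_right _ (hg0 u)
        exact Real.rpow_le_rpow_of_nonpos (hfpos u) (hfub u) (by linarith)
      have hJlb : R ^ (p-1) * c0 ≤ J := by
        have h1 : (∫ u : sphere (0 : EuclideanSpace ℝ (Fin n)) 1,
            R^(p-1) * g u ∂(sphMeasure n)) ≤ J :=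
          integral_mono (integrable_cont (continuous_const.mul hgcont)) hIntFg hFlb
        rw [integral_const_mul] at h1
        have h3 : c0 ≤ ∫ u : sphere (0 : EuclideanSpace ℝ (Fin n)) 1, g u ∂(sphMeasure n) := by
          rw [← hgsq]
          apply integral_mono (integrable_cont (hgcont.pow 2)) (integrable_cont hgcont)
          intro u
          have hh1 := hg0 u
          have hh2 := hg1 u
          show (g u)^2 ≤ g u
          nlinarith
        have h4 : (0:ℝ) ≤ R^(p-1) := (Real.rpow_pos_of_pos hRpos _).le
        nlinarith
      have hfin : R ^ p * c0 ≤ 2*a := by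
        have hmul : R * (R^(p-1) * c0) ≤ R * J := mul_le_mul_of_nonneg_left hJlb hRpos.le
        have hRp : R * R^(p-1) = R^p := by
          calc R * R^(p-1) = R^(1:ℝ) * R^(p-1) := by rw [Real.rpow_one]
            _ = R^(1+(p-1)) := (Real.rpow_add hRpos _ _).symm
            _ = R^p := by ring_nf
        nlinarith
      have hd : R ≤ d1 := le_rpow_bound hRpos hp hc0pos hfin
      exact le_trans hd (le_trans (le_max_left d1 d2) (le_max_left _ d3))
    · rcases le_or_gt p 2 with hple2 | hpgt2
      · -- case 1 < p ≤ 2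
        have hIfg : Integrable (fun u : sphere (0 : EuclideanSpace ℝ (Fin n)) 1 => f u * g u)
            (sphMeasure n) := integrable_cont (hfcont.mul hgcont)
        have hIfnmg : Integrable (fun u : sphere (0 : EuclideanSpace ℝ (Fin n)) 1
            => f (nm u) * g u) (sphMeasure n) :=
          integrable_cont ((hfcont.comp hcontnm).mul hgcont)
        have hI : R * c0 ≤ 2 * ∫ u : sphere (0 : EuclideanSpace ℝ (Fin n)) 1,
            f u * g u ∂(sphMeasure n) := by
          have h1 : (∫ u : sphere (0 : EuclideanSpace ℝ (Fin n)) 1,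
              f (nm u) * g (nm u) ∂(sphMeasure n)) = ∫ u : sphere (0 : EuclideanSpace ℝ (Fin n)) 1,
              f u * g u ∂(sphMeasure n) := hsymm _ (hfcont.mul hgcont)
          have h2 : (∫ u : sphere (0 : EuclideanSpace ℝ (Fin n)) 1,
              f (nm u) * g u ∂(sphMeasure n)) = ∫ u : sphere (0 : EuclideanSpace ℝ (Fin n)) 1,
              f u * g u ∂(sphMeasure n) := by
            rw [← h1]; congr 1; funext u; rw [hgneg]
          have h3 : (∫ u : sphere (0 : EuclideanSpace ℝ (Fin n)) 1,
              R * (g u)^2 ∂(sphMeasure n)) ≤ ∫ u : sphere (0 : EuclideanSpace ℝ (Fin n)) 1,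
              (f u * g u + f (nm u) * g u) ∂(sphMeasure n) := by
            apply integral_mono (integrable_cont (continuous_const.mul (hgcont.pow 2)))
              (hIfg.add hIfnmg)
            intro u
            have hh1 := hfneglb u
            have hh2 := hg0 u
            show R * (g u)^2 ≤ f u * g u + f (nm u) * g u
            nlinarith
          rw [integral_add hIfg hIfnmg, h2, integral_const_mul, hgsq] at h3
          linarith
        have hJlb : R^(p-2) * (R * c0 / 2) ≤ J := by
          have hFge : ∀ u : sphere (0 : EuclideanSpace ℝ (Fin n)) 1,
              (R^(p-2) * f u) * g u ≤ F u * g u := by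
            intro u
            apply mul_le_mul_of_nonneg_right _ (hg0 u)
            have he1 : F u = f u ^(p-2) * f u := by
              show f u ^ (p-1) = _
              calc f u ^ (p-1) = f u ^ ((p-2)+1) := by ring_nf
                _ = f u ^(p-2) * f u ^(1:ℝ) := Real.rpow_add (hfpos u) _ _
                _ = f u ^(p-2) * f u := by rw [Real.rpow_one]
            rw [he1]
            exact mul_le_mul_of_nonneg_right
              (Real.rpow_le_rpow_of_nonpos (hfpos u) (hfub u) (by linarith)) (hfpos u).le
          have h1 : (∫ u : sphere (0 : EuclideanSpace ℝ (Fin n)) 1,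
              (R^(p-2) * f u) * g u ∂(sphMeasure n)) ≤ J :=
            integral_mono (integrable_cont ((continuous_const.mul hfcont).mul hgcont)) hIntFg hFge
          have h2 : (∫ u : sphere (0 : EuclideanSpace ℝ (Fin n)) 1,
              (R^(p-2) * f u) * g u ∂(sphMeasure n)) = R^(p-2) * ∫ u : sphere (0 : EuclideanSpace ℝ (Fin n)) 1,
              f u * g u ∂(sphMeasure n) := by
            rw [← integral_const_mul _ _]; congr 1; funext u; ring
          rw [h2] at h1
          have h4 : (0:ℝ) ≤ R^(p-2) := (Real.rpow_pos_of_pos hRpos _).le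
          nlinarith
        have hfin : R ^ p * (c0/2) ≤ 2*a := by
          have hmul : R * (R^(p-2) * (R * c0 / 2)) ≤ R * J := mul_le_mul_of_nonneg_left hJlb hRpos.le
          have hRp : R * (R^(p-2) * R) = R^p := by
            have e1 : R^(p-2) * R = R^(p-1) := by
              calc R^(p-2) * R = R^(p-2) * R^(1:ℝ) := by rw [Real.rpow_one]
                _ = R^((p-2)+1) := (Real.rpow_add hRpos _ _).symm
                _ = R^(p-1) := by ring_nf
            rw [e1]
            calc R * R^(p-1) = R^(1:ℝ) * R^(p-1) := by rw [Real.rpow_one]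
              _ = R^(1+(p-1)) := (Real.rpow_add hRpos _ _).symm
              _ = R^p := by ring_nf
          have e2 : R * (R^(p-2) * (R * c0 / 2)) = (R * (R^(p-2) * R)) * (c0/2) := by ring
          rw [e2, hRp] at hmul
          linarith
        have hd : R ≤ d2 := le_rpow_bound hRpos hp (by positivity) hfin
        exact le_trans hd (le_trans (le_max_right d1 d2) (le_max_left _ d3))
      · -- case p > 2
        have hIFnmg : Integrable (fun u : sphere (0 : EuclideanSpace ℝ (Fin n)) 1
            => F (nm u) * g u) (sphMeasure n) :=
          integrable_cont ((hFcont.comp hcontnm).mul hgcont)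
        have hFsymm : (∫ u : sphere (0 : EuclideanSpace ℝ (Fin n)) 1,
            F (nm u) * g u ∂(sphMeasure n)) = J := by
          have h1 : (∫ u : sphere (0 : EuclideanSpace ℝ (Fin n)) 1,
              F (nm u) * g (nm u) ∂(sphMeasure n)) = J := hsymm _ (hFcont.mul hgcont)
          rw [← h1]; congr 1; funext u; rw [hgneg]
        set A : Set (sphere (0 : EuclideanSpace ℝ (Fin n)) 1) := {u | t ≤ g u} with hAdef
        have hAmeas : MeasurableSet A := (isClosed_le continuous_const hgcont).measurableSet
        have hmemA : ∀ u : sphere (0 : EuclideanSpace ℝ (Fin n)) 1, u ∈ A ↔ t ≤ g u := by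
          intro u; simp only [hAdef, Set.mem_setOf_eq]
        have hAlb : c0/2 ≤ ((sphMeasure n) A).toReal := by
          have hpt2 : ∀ u : sphere (0 : EuclideanSpace ℝ (Fin n)) 1,
              (g u)^2 ≤ t^2 + A.indicator (fun _ => (1:ℝ)) u := by
            intro u
            by_cases hu : u ∈ A
            · rw [Set.indicator_of_mem hu]
              have hh1 := hg1 u
              have hh2 := hg0 u
              have hsq : (g u)^2 ≤ 1 := pow_le_one₀ hh2 hh1
              have hsq2 : (0:ℝ) ≤ t^2 := sq_nonneg t
              linarith
            · rw [Set.indicator_of_notMem hu, add_zero]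
              have hh : g u < t := lt_of_not_ge (fun h => hu ((hmemA u).mpr h))
              have hh2 := hg0 u
              exact pow_le_pow_left₀ hh2 hh.le 2
          have hint : (∫ u : sphere (0 : EuclideanSpace ℝ (Fin n)) 1,
              (g u)^2 ∂(sphMeasure n)) ≤ ∫ u : sphere (0 : EuclideanSpace ℝ (Fin n)) 1,
              (t^2 + A.indicator (fun _ => (1:ℝ)) u) ∂(sphMeasure n) :=
            integral_mono (integrable_cont (hgcont.pow 2))
              ((integrable_const _).add ((integrable_const 1).indicator hAmeas)) hpt2
          rw [integral_add (integrable_const _) ((integrable_const 1).indicator hAmeas),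
            integral_const, integral_indicator_const _ hAmeas, hgsq] at hint
          simp only [smul_eq_mul, mul_one, measureReal_def] at hint
          have hS2 : ((sphMeasure n) Set.univ).toReal * t^2 = c0/2 := by
            rw [ht2, ← hSdef]
            field_simp
          linarith
        have hJlb : 2^((2:ℝ)-p) * ((R*t)^(p-1) * t) * (c0/2) ≤ 2*J := by
          have htwo : (2:ℝ)^((2:ℝ)-p) * 2^(p-(2:ℝ)) = 1 := by
            rw [← Real.rpow_add two_pos]
            norm_num
          have hptw : ∀ u : sphere (0 : EuclideanSpace ℝ (Fin n)) 1,
              (2:ℝ)^((2:ℝ)-p) * (A.indicator (fun _ => (R*t)^(p-1) * t) u)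
                ≤ F u * g u + F (nm u) * g u := by
            intro u
            by_cases hu : u ∈ A
            · rw [Set.indicator_of_mem hu]
              have h1 : R * g u ≤ f u + f (nm u) := hfneglb u
              have hgu0 := hg0 u
              have htgu : t ≤ g u := (hmemA u).mp hu
              have h2 : (R * t)^(p-1) ≤ (R * g u)^(p-1) :=
                Real.rpow_le_rpow (by positivity)
                  (mul_le_mul_of_nonneg_left htgu hRpos.le) (by linarith)
              have h3 : (R * g u)^(p-1) ≤ (f u + f (nm u))^(p-1) :=
                Real.rpow_le_rpow (by positivity) h1 (by linarith)
              have h4 : (f u + f (nm u))^(p-1) ≤ 2^(p-(2:ℝ)) * (F u + F (nm u)) := by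
                have := rpow_two_add_le (hfpos u).le (hfpos (nm u)).le
                  (show (1:ℝ) ≤ p - 1 by linarith)
                have he : p - 1 - 1 = p - (2:ℝ) := by ring
                rw [he] at this
                exact this
              have h5 : (R*t)^(p-1) * t ≤ (2^(p-(2:ℝ)) * (F u + F (nm u))) * g u := by
                have s1 : (R*t)^(p-1) * t ≤ (f u + f (nm u))^(p-1) * g u := by
                  apply mul_le_mul (le_trans h2 h3) htgu htpos.le
                  exact Real.rpow_nonneg (add_nonneg (hfpos u).le (hfpos (nm u)).le) _
                refine le_trans s1 ?_
                apply mul_le_mul_of_nonneg_right h4 hgu0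
              have h6 : (2:ℝ)^((2:ℝ)-p) * ((R*t)^(p-1) * t)
                  ≤ (2:ℝ)^((2:ℝ)-p) * ((2^(p-(2:ℝ)) * (F u + F (nm u))) * g u) :=
                mul_le_mul_of_nonneg_left h5 (Real.rpow_pos_of_pos two_pos _).le
              refine le_trans h6 (le_of_eq ?_)
              calc (2:ℝ)^((2:ℝ)-p) * ((2^(p-(2:ℝ)) * (F u + F (nm u))) * g u)
                  = ((2:ℝ)^((2:ℝ)-p) * 2^(p-(2:ℝ))) * ((F u + F (nm u)) * g u) := by ring
                _ = (F u + F (nm u)) * g u := by rw [htwo, one_mul]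
                _ = F u * g u + F (nm u) * g u := by ring
            · rw [Set.indicator_of_notMem hu, mul_zero]
              have := hF0 u
              have := hF0 (nm u)
              have := hg0 u
              positivity
          have hint2 : (∫ u : sphere (0 : EuclideanSpace ℝ (Fin n)) 1,
              (2:ℝ)^((2:ℝ)-p) * (A.indicator (fun _ => (R*t)^(p-1) * t) u) ∂(sphMeasure n))
              ≤ ∫ u : sphere (0 : EuclideanSpace ℝ (Fin n)) 1,
                (F u * g u + F (nm u) * g u) ∂(sphMeasure n) :=
            integral_mono (((integrable_const _).indicator hAmeas).const_mul _)
              (hIntFg.add hIFnmg) hptw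
          rw [integral_add hIntFg hIFnmg, hFsymm, integral_const_mul,
            integral_indicator_const _ hAmeas] at hint2
          simp only [smul_eq_mul, measureReal_def] at hint2
          have hcoef : (0:ℝ) ≤ 2^((2:ℝ)-p) * ((R*t)^(p-1) * t) := by positivity
          have : 2^((2:ℝ)-p) * ((R*t)^(p-1) * t) * (c0/2)
              ≤ 2^((2:ℝ)-p) * (((sphMeasure n) A).toReal * ((R*t)^(p-1) * t)) := by
            calc 2^((2:ℝ)-p) * ((R*t)^(p-1) * t) * (c0/2)
                ≤ 2^((2:ℝ)-p) * ((R*t)^(p-1) * t) * ((sphMeasure n) A).toReal := by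
                  apply mul_le_mul_of_nonneg_left hAlb hcoef
              _ = 2^((2:ℝ)-p) * (((sphMeasure n) A).toReal * ((R*t)^(p-1) * t)) := by ring
          calc 2^((2:ℝ)-p) * ((R*t)^(p-1) * t) * (c0/2)
              ≤ 2^((2:ℝ)-p) * (((sphMeasure n) A).toReal * ((R*t)^(p-1) * t)) := this
            _ ≤ J + J := hint2
            _ = 2 * J := by ring
        have hfin : R ^ p * κ ≤ 4*a := by
          have hmul : R * (2^((2:ℝ)-p) * ((R*t)^(p-1) * t) * (c0/2)) ≤ R * (2*J) :=
            mul_le_mul_of_nonneg_left hJlb hRpos.le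
          have hRt : (R*t)^(p-1) = R^(p-1) * t^(p-1) := Real.mul_rpow hRpos.le htpos.le
          have hRp : R * R^(p-1) = R^p := by
            calc R * R^(p-1) = R^(1:ℝ) * R^(p-1) := by rw [Real.rpow_one]
              _ = R^(1+(p-1)) := (Real.rpow_add hRpos _ _).symm
              _ = R^p := by ring_nf
          have e3 : R * (2^((2:ℝ)-p) * ((R*t)^(p-1) * t) * (c0/2)) = R^p * κ := by
            rw [hRt, hκdef]
            calc R * (2^((2:ℝ)-p) * ((R^(p-1) * t^(p-1)) * t) * (c0/2))
                = (R * R^(p-1)) * (2^((2:ℝ)-p) * (t^(p-1) * t * (c0/2))) := by ring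
              _ = R^p * (2^((2:ℝ)-p) * (t^(p-1) * t * (c0/2))) := by rw [hRp]
          rw [e3] at hmul
          linarith
        have hd : R ≤ d3 := le_rpow_bound hRpos hp hκpos hfin
        exact le_trans hd (le_max_right _ d3)
  exact hfinal
end
end

section
/- Let n ≥ 2 and fix 0 < a < ∞. There exists a constant D, depending only on n and a, with the following property: for every convex body K in ℝ^n with V(K) = ω_n, if x is an interior point of K satisfying ∫_{S^{n−1}} u / (h_K(u) − ⟨x,u⟩) dσ(u) = 0 and exp( (1/ω_n) ∫_{S^{n−1}} −log(h_K(u) − ⟨x,u⟩) dσ(u) ) ≥ a, then the diameter of K is at most D. -/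
open MeasureTheory Metric Filter

set_option maxHeartbeats 1000000

open Set
open scoped Pointwise ENNReal NNReal

noncomputable section

abbrev Euc (n : ℕ) := EuclideanSpace ℝ (Fin n)


variable {n : ℕ} {K : Set (EuclideanSpace ℝ (Fin n))}

lemma bddAbove_inner_image {M : ℝ} (hM : ∀ y ∈ K, ‖y‖ ≤ M) (u : EuclideanSpace ℝ (Fin n)) :
    BddAbove ((fun y => (inner ℝ y u : ℝ)) '' K) := by
  refine ⟨M * ‖u‖, ?_⟩
  rintro - ⟨y, hy, rfl⟩
  calc (inner ℝ y u : ℝ) ≤ ‖y‖ * ‖u‖ := real_inner_le_norm y u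
    _ ≤ M * ‖u‖ := mul_le_mul_of_nonneg_right (hM y hy) (norm_nonneg u)

lemma le_suppFn {M : ℝ} (hM : ∀ y ∈ K, ‖y‖ ≤ M) {y : EuclideanSpace ℝ (Fin n)} (hy : y ∈ K)
    (u : EuclideanSpace ℝ (Fin n)) : (inner ℝ y u : ℝ) ≤ suppFn K u :=
  le_csSup (bddAbove_inner_image hM u) ⟨y, hy, rfl⟩

lemma suppFn_le (hne : K.Nonempty) {c : ℝ} (u : EuclideanSpace ℝ (Fin n))
    (h : ∀ y ∈ K, (inner ℝ y u : ℝ) ≤ c) : suppFn K u ≤ c := by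
  refine csSup_le (hne.image _) ?_
  rintro - ⟨y, hy, rfl⟩; exact h y hy

lemma suppFn_lip (hne : K.Nonempty) {M : ℝ} (hM : ∀ y ∈ K, ‖y‖ ≤ M)
    (u v : EuclideanSpace ℝ (Fin n)) : suppFn K u ≤ suppFn K v + M * ‖u - v‖ := by
  refine suppFn_le hne u fun y hy => ?_
  have h1 : (inner ℝ y u : ℝ) = (inner ℝ y v : ℝ) + (inner ℝ y (u - v) : ℝ) := by
    rw [← inner_add_right, add_sub_cancel]
  rw [h1]
  have h2 : (inner ℝ y (u - v) : ℝ) ≤ M * ‖u - v‖ := by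
    calc (inner ℝ y (u - v) : ℝ) ≤ ‖y‖ * ‖u - v‖ := real_inner_le_norm _ _
      _ ≤ M * ‖u - v‖ := mul_le_mul_of_nonneg_right (hM y hy) (norm_nonneg _)
  have := le_suppFn hM hy v
  linarith

lemma continuous_suppFn (hne : K.Nonempty) {M : ℝ} (hM : ∀ y ∈ K, ‖y‖ ≤ M) :
    Continuous (suppFn K) := by
  have hM0 : 0 ≤ M := (norm_nonneg _).trans (hM _ hne.choose_spec)
  refine (LipschitzWith.of_dist_le_mul (K := Real.toNNReal M) (f := suppFn K) ?_).continuous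
  intro u v
  rw [Real.dist_eq, Real.coe_toNNReal _ hM0, dist_eq_norm]
  rw [abs_sub_le_iff]
  constructor
  · have := suppFn_lip hne hM u v; linarith
  · have := suppFn_lip hne hM v u
    rw [norm_sub_rev] at this; linarith





instance (n : ℕ) : IsFiniteMeasure (sphMeasure n) := by
  unfold sphMeasure; infer_instance

lemma band_bound {n : ℕ} (hn : 0 < n) (w : EuclideanSpace ℝ (Fin n)) (hw : ‖w‖ = 1)
    (s : ℝ) (hs : 0 ≤ s) :
    (sphMeasure n {u : sphere (0 : Euc n) 1 |
        |(inner ℝ w (u : Euc n) : ℝ)| ≤ s}).toReal ≤ (n : ℝ) * 2 ^ n * s := by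
  set i0 : Fin n := ⟨0, hn⟩
  have hcard : Module.finrank ℝ (Euc n) = Fintype.card (Fin n) := by
    simp [finrank_euclideanSpace_fin]
  have horth : Orthonormal ℝ (({i0} : Set (Fin n)).restrict (fun _ : Fin n => w)) := by
    constructor
    · intro i; simpa [Set.restrict] using hw
    · intro i j hij
      exact absurd (Subsingleton.elim i j) hij
  obtain ⟨b, hb⟩ := horth.exists_orthonormalBasis_extension_of_card_eq hcard
  have hbi0 : b i0 = w := hb i0 rfl
  set A : Set (sphere (0 : Euc n) 1) :=
    {u : sphere (0 : Euc n) 1 | |(inner ℝ w (u : Euc n) : ℝ)| ≤ s} with hA_def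
  have hA : MeasurableSet A := by
    have : Continuous fun u : sphere (0 : Euc n) 1 => |(inner ℝ w (u : Euc n) : ℝ)| :=
      (continuous_const.inner continuous_subtype_val).abs
    exact (isClosed_le this continuous_const).measurableSet
  have happly : sphMeasure n A
      = (Module.finrank ℝ (Euc n) : ℝ≥0∞) * volume (Ioo (0:ℝ) 1 • (((↑) '' A) : Set (Euc n))) :=
    Measure.toSphere_apply' volume hA
  set c : Fin n → ℝ := fun i => if i = i0 then s else 1 with hc
  set Box : Set (Euc n) := (MeasurableEquiv.toLp 2 (Fin n → ℝ)).symm ⁻¹' Set.pi Set.univ (fun i => Icc (-(c i)) (c i)) with hBox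
  have hBoxm : MeasurableSet Box := (MeasurableEquiv.toLp 2 (Fin n → ℝ)).symm.measurable (MeasurableSet.univ_pi fun i => measurableSet_Icc)
  have hsub : (Ioo (0:ℝ) 1 • (((↑) '' A) : Set (Euc n))) ⊆ b.repr ⁻¹' Box := by
    rintro - ⟨a, ha, -, ⟨u, hu, rfl⟩, rfl⟩
    intro i _
    have hnorm : ‖(u : Euc n)‖ = 1 := by
      have := u.2; simpa [mem_sphere_iff_norm] using this
    have hrepr : b.repr (a • (u : Euc n)) i = a * (inner ℝ (b i) (u : Euc n) : ℝ) := by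
      rw [b.repr.map_smul]
      simp [b.repr_apply_apply, real_inner_smul_left]
    rw [Set.mem_Icc, ← abs_le]; change |b.repr (a • (u : Euc n)) i| ≤ c i; rw [hrepr, abs_mul]
    have ha1 : |a| ≤ 1 := le_of_lt (abs_lt.2 ⟨by linarith [ha.1], ha.2⟩)
    rcases eq_or_ne i i0 with rfl | hii
    · simp only [hc, if_pos rfl]
      calc |a| * |(inner ℝ (b i0) (u : Euc n) : ℝ)| ≤ 1 * s := by
            apply mul_le_mul ha1 _ (abs_nonneg _) zero_le_one
            rw [hbi0]; exact hu
      _ = s := one_mul s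
    · simp only [hc, if_neg hii]
      calc |a| * |(inner ℝ (b i) (u : Euc n) : ℝ)| ≤ 1 * 1 := by
            apply mul_le_mul ha1 _ (abs_nonneg _) zero_le_one
            calc |(inner ℝ (b i) (u : Euc n) : ℝ)| ≤ ‖b i‖ * ‖(u : Euc n)‖ :=
                  abs_real_inner_le_norm _ _
              _ = 1 := by rw [hnorm, b.orthonormal.1 i, one_mul]
      _ = 1 := one_mul 1
  have hvol_pre : volume (b.repr ⁻¹' Box) = volume Box :=
    b.measurePreserving_repr.measure_preimage hBoxm.nullMeasurableSet
  have hvol_box : volume Box = ENNReal.ofReal (2*s) * (ENNReal.ofReal 2) ^ (n - 1) := by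
    have e := EuclideanSpace.volume_preserving_symm_measurableEquiv_toLp (Fin n)
    have hpre : (MeasurableEquiv.toLp 2 (Fin n → ℝ)).symm ⁻¹'
        (Set.pi Set.univ (fun i => Icc (-(c i)) (c i)) : Set (Fin n → ℝ)) = Box := by
      rfl
    rw [← hpre, e.measure_preimage
      (MeasurableSet.univ_pi fun i => measurableSet_Icc).nullMeasurableSet]
    rw [volume_pi_pi]
    have hIcc : ∀ i, (volume (Icc (-(c i)) (c i)) : ℝ≥0∞) = ENNReal.ofReal (2 * c i) := by
      intro i; rw [Real.volume_Icc]; ring_nf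
    simp only [hIcc]
    rw [Finset.prod_eq_mul_prod_sdiff_singleton_of_mem (Finset.mem_univ i0)
      (fun i => ENNReal.ofReal (2 * c i))]
    have h1 : ENNReal.ofReal (2 * c i0) = ENNReal.ofReal (2*s) := by simp [hc]
    have h2 : ∀ i ∈ Finset.univ \ {i0}, ENNReal.ofReal (2 * c i) = ENNReal.ofReal 2 := by
      intro i hi
      have : i ≠ i0 := by simpa using (Finset.mem_sdiff.mp hi).2
      simp [hc, this]
    rw [h1, Finset.prod_congr rfl h2, Finset.prod_const]
    congr 1
    rw [Finset.card_sdiff_of_subset (by simp), Finset.card_univ]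
    simp
  -- combine
  have hle : sphMeasure n A ≤ ENNReal.ofReal ((n : ℝ) * 2 ^ n * s) := by
    rw [happly, hcard]
    calc (Fintype.card (Fin n) : ℝ≥0∞) * volume (Ioo (0:ℝ) 1 • (((↑) '' A) : Set (Euc n)))
        ≤ (n : ℝ≥0∞) * volume Box := by
          rw [Fintype.card_fin]
          exact mul_le_mul_right ((measure_mono hsub).trans hvol_pre.le) _
      _ = ENNReal.ofReal ((n : ℝ) * 2 ^ n * s) := by
          rw [hvol_box]
          rw [← ENNReal.ofReal_pow (by norm_num : (0:ℝ) ≤ 2),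
            ← ENNReal.ofReal_mul (by linarith : (0:ℝ) ≤ 2*s),
            ← ENNReal.ofReal_natCast n,
            ← ENNReal.ofReal_mul (by positivity : (0:ℝ) ≤ (n:ℝ))]
          congr 1
          have h2n : (2:ℝ) * 2 ^ (n-1) = 2 ^ n := by
            rw [← pow_succ']
            congr 1
            omega
          calc (n:ℝ) * (2*s * 2^(n-1)) = (n:ℝ) * ((2 * 2^(n-1)) * s) := by ring
            _ = (n:ℝ) * 2^n * s := by rw [h2n]; ring
  calc (sphMeasure n A).toReal ≤ (ENNReal.ofReal ((n : ℝ) * 2 ^ n * s)).toReal :=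
        ENNReal.toReal_mono ENNReal.ofReal_ne_top hle
    _ ≤ (n : ℝ) * 2 ^ n * s := le_of_eq (ENNReal.toReal_ofReal (by positivity))


/-- for `n ≥ 2` and `0 < a < ∞`, there is `D = D(n,a)` such that every convex body
`K` with `V(K) = ω_n` admitting an interior point `x` with `∫ u / (h_K(u) - ⟨x,u⟩) dσ(u) = 0` and
`exp((1/ω_n) ∫ -log (h_K(u) - ⟨x,u⟩) dσ(u)) ≥ a` has diameter at most `D`. -/
theorem statement_7 {n : ℕ} (hn : 2 ≤ n) (a : ℝ) (ha : 0 < a) :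
    ∃ D : ℝ, ∀ (K : Set (EuclideanSpace ℝ (Fin n))),
      IsCompact K → Convex ℝ K → (interior K).Nonempty → volume K = volume (ball (0 : EuclideanSpace ℝ (Fin n)) 1) →
      ∀ x ∈ interior K,
        (∫ u : sphere (0 : EuclideanSpace ℝ (Fin n)) 1, ((suppFn K u - (inner ℝ x (u : EuclideanSpace ℝ (Fin n)) : ℝ))⁻¹) • (u : EuclideanSpace ℝ (Fin n)) ∂(sphMeasure n)) = 0 →
        a ≤ Real.exp (((volume (ball (0 : EuclideanSpace ℝ (Fin n)) 1)).toReal)⁻¹ * (∫ u : sphere (0 : EuclideanSpace ℝ (Fin n)) 1, -Real.log (suppFn K u - (inner ℝ x (u : EuclideanSpace ℝ (Fin n)) : ℝ)) ∂(sphMeasure n))) →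
        Metric.diam K ≤ D := by
  classical
  have hn0 : 0 < n := by omega
  set ω : ℝ := (volume (ball (0 : EuclideanSpace ℝ (Fin n)) 1)).toReal with hω_def
  have hω : 0 < ω := ENNReal.toReal_pos (measure_ball_pos volume 0 one_pos).ne' measure_ball_lt_top.ne
  set σS : ℝ := (sphMeasure n (Set.univ : Set (sphere (0 : EuclideanSpace ℝ (Fin n)) 1))).toReal with hσS_def
  haveI : Nontrivial (EuclideanSpace ℝ (Fin n)) := by
    refine nontrivial_of_ne (EuclideanSpace.single ⟨0, hn0⟩ (1:ℝ)) 0 ?_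
    intro h
    have := congrArg norm h
    rw [EuclideanSpace.norm_single] at this
    simp at this
  have hσS : 0 < σS := by
    rw [hσS_def]
    refine ENNReal.toReal_pos ?_ (measure_ne_top _ _)
    unfold sphMeasure
    rw [Measure.toSphere_apply_univ]
    refine (ENNReal.mul_pos ?_ (measure_ball_pos volume 0 one_pos).ne').ne'
    have : Module.finrank ℝ (EuclideanSpace ℝ (Fin n)) = n := finrank_euclideanSpace_fin
    rw [this]
    simp [hn0.ne']
  set cInt : ℝ := ∫ t in Set.Ioi (0:ℝ), Real.exp (-(2⁻¹) * t) with hcInt_def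
  have hcInt0 : 0 ≤ cInt :=
    setIntegral_nonneg measurableSet_Ioi fun t _ => (Real.exp_pos _).le
  set C₁ : ℝ := (n:ℝ) * 2^n + σS with hC₁_def
  have hC₁0 : 0 ≤ C₁ := by positivity
  refine ⟨2 * Real.exp ((C₁ * cInt + ω * |Real.log a|) / σS), ?_⟩
  intro K hK _hKconv hKint _hKvol x hx hgrad hent
  obtain ⟨r, hr0, hball⟩ : ∃ r > 0, ball x r ⊆ K := by
    rcases Metric.isOpen_iff.mp isOpen_interior x hx with ⟨r, hr, h⟩
    exact ⟨r, hr, h.trans interior_subset⟩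
  have hxK : x ∈ K := interior_subset hx
  have hKne : K.Nonempty := ⟨x, hxK⟩
  obtain ⟨M, hM⟩ : ∃ M, ∀ y ∈ K, ‖y‖ ≤ M := by
    rcases hK.isBounded.subset_closedBall 0 with ⟨ρ, hρ⟩
    exact ⟨ρ, fun y hy => by simpa [mem_closedBall_zero_iff] using hρ hy⟩
  -- farthest point
  obtain ⟨p, hpK, hpmax⟩ := hK.exists_isMaxOn hKne
    ((continuous_const.dist continuous_id).continuousOn :
      ContinuousOn (fun y => dist x y) K)
  have hpmax' : ∀ y ∈ K, dist x y ≤ dist x p := fun y hy => hpmax hy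
  set R : ℝ := dist x p with hR_def
  have hrR : r / 2 ≤ R := by
    have hmem : x + (r/2) • (EuclideanSpace.single (⟨0, hn0⟩ : Fin n) (1:ℝ)) ∈ ball x r := by
      rw [mem_ball, dist_comm, dist_self_add_right, norm_smul, EuclideanSpace.norm_single]
      simp only [norm_one, mul_one, Real.norm_eq_abs]
      rw [abs_of_pos (by positivity)]
      linarith
    have := hpmax' _ (hball hmem)
    rw [dist_self_add_right, norm_smul, EuclideanSpace.norm_single] at this
    simp only [norm_one, mul_one, Real.norm_eq_abs] at this
    rwa [abs_of_pos (by positivity)] at this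
  have hR : 0 < R := lt_of_lt_of_le (by positivity) hrR
  have hdiam : Metric.diam K ≤ 2 * R := by
    refine Metric.diam_le_of_forall_dist_le (by positivity) fun y hy z hz => ?_
    calc dist y z ≤ dist y x + dist x z := dist_triangle y x z
      _ ≤ R + R := add_le_add (by rw [dist_comm]; exact hpmax' y hy) (hpmax' z hz)
      _ = 2 * R := by ring
  set w : EuclideanSpace ℝ (Fin n) := R⁻¹ • (p - x) with hw_def
  have hpxnorm : ‖p - x‖ = R := by rw [← dist_eq_norm, dist_comm]
  have hw : ‖w‖ = 1 := by
    rw [hw_def, norm_smul, hpxnorm, Real.norm_eq_abs, abs_of_pos (by positivity)]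
    field_simp
  have hpx : p - x = R • w := by
    rw [hw_def, smul_smul, mul_inv_cancel₀ hR.ne', one_smul]
  -- the function f
  set S := sphere (0 : EuclideanSpace ℝ (Fin n)) 1
  set f : S → ℝ := fun u => suppFn K u - (inner ℝ x (u : EuclideanSpace ℝ (Fin n)) : ℝ) with hf_def
  set g : S → ℝ := fun u => (inner ℝ w (u : EuclideanSpace ℝ (Fin n)) : ℝ) with hg_def
  have hunorm : ∀ u : S, ‖(u : EuclideanSpace ℝ (Fin n))‖ = 1 := fun u => by
    have := u.2; simpa [mem_sphere_iff_norm] using this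
  have hflb : ∀ u : S, r/2 ≤ f u := by
    intro u
    have hymem : x + (r/2) • (u : EuclideanSpace ℝ (Fin n)) ∈ K := by
      apply hball
      rw [mem_ball, dist_comm, dist_self_add_right, norm_smul, hunorm]
      simp only [mul_one, Real.norm_eq_abs]
      rw [abs_of_pos (by positivity)]; linarith
    have h1 := le_suppFn hM hymem (u : EuclideanSpace ℝ (Fin n))
    rw [inner_add_left, real_inner_smul_left, real_inner_self_eq_norm_mul_norm, hunorm] at h1
    simp only [mul_one] at h1
    simp only [hf_def]
    linarith
  have hfpos : ∀ u : S, 0 < f u := fun u => lt_of_lt_of_le (by positivity) (hflb u)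
  have hfR : ∀ u : S, f u ≤ R := by
    intro u
    have : suppFn K (u : EuclideanSpace ℝ (Fin n))
        ≤ (inner ℝ x (u : EuclideanSpace ℝ (Fin n)) : ℝ) + R := by
      refine suppFn_le hKne _ fun y hy => ?_
      have h1 : (inner ℝ y (u : EuclideanSpace ℝ (Fin n)) : ℝ)
          - (inner ℝ x (u : EuclideanSpace ℝ (Fin n)) : ℝ)
          = (inner ℝ (y - x) (u : EuclideanSpace ℝ (Fin n)) : ℝ) := by
        rw [inner_sub_left]
      have h2 : (inner ℝ (y - x) (u : EuclideanSpace ℝ (Fin n)) : ℝ) ≤ R := by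
        calc (inner ℝ (y - x) (u : EuclideanSpace ℝ (Fin n)) : ℝ) ≤ ‖y - x‖ * ‖(u : EuclideanSpace ℝ (Fin n))‖ :=
              real_inner_le_norm _ _
          _ = dist y x := by rw [hunorm, mul_one, dist_eq_norm]
          _ ≤ R := by rw [dist_comm]; exact hpmax' y hy
      linarith
    simp only [hf_def]; linarith
  have hfw : ∀ u : S, R * g u ≤ f u := by
    intro u
    have h1 := le_suppFn hM hpK (u : EuclideanSpace ℝ (Fin n))
    have h2 : (inner ℝ p (u : EuclideanSpace ℝ (Fin n)) : ℝ)
        - (inner ℝ x (u : EuclideanSpace ℝ (Fin n)) : ℝ) = R * g u := by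
      rw [← inner_sub_left, hpx, real_inner_smul_left]
    simp only [hf_def, hg_def] at *
    linarith
  have hfc : Continuous f := by
    refine Continuous.sub ?_ (continuous_const.inner continuous_subtype_val)
    exact (continuous_suppFn hKne hM).comp continuous_subtype_val
  have hgc : Continuous g := continuous_const.inner continuous_subtype_val
  have key : ∀ (φ : S → ℝ), Continuous φ → Integrable φ (sphMeasure n) := by
    intro φ hφ
    exact hφ.integrable_of_hasCompactSupport
      (IsCompact.of_isClosed_subset isCompact_univ (isClosed_tsupport φ) (Set.subset_univ _))
  -- gradient condition scalarized
  have hgint : Integrable (fun u : S => (f u)⁻¹ • (u : EuclideanSpace ℝ (Fin n))) (sphMeasure n) := by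
    refine Continuous.integrable_of_hasCompactSupport ?_
      (IsCompact.of_isClosed_subset isCompact_univ (isClosed_tsupport _) (Set.subset_univ _))
    exact (hfc.inv₀ fun u => (hfpos u).ne').smul continuous_subtype_val
  have hzero : ∫ u : S, (f u)⁻¹ * g u ∂(sphMeasure n) = 0 := by
    have h1 : ∀ u : S, (f u)⁻¹ * g u
        = (inner ℝ w ((f u)⁻¹ • (u : EuclideanSpace ℝ (Fin n))) : ℝ) := by
      intro u; rw [real_inner_smul_right]
    calc ∫ u : S, (f u)⁻¹ * g u ∂(sphMeasure n)
        = ∫ u : S, (inner ℝ w ((f u)⁻¹ • (u : EuclideanSpace ℝ (Fin n))) : ℝ) ∂(sphMeasure n) := by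
          simp only [h1]
      _ = (inner ℝ w (∫ u : S, (f u)⁻¹ • (u : EuclideanSpace ℝ (Fin n)) ∂(sphMeasure n)) : ℝ) :=
          integral_inner hgint w
      _ = 0 := by rw [hgrad, inner_zero_right]
  set φm : S → ℝ := fun u => (f u)⁻¹ * max (-g u) 0 with hφm_def
  set φp : S → ℝ := fun u => (f u)⁻¹ * max (g u) 0 with hφp_def
  have hφmc : Continuous φm := (hfc.inv₀ fun u => (hfpos u).ne').mul (hgc.neg.max continuous_const)
  have hφpc : Continuous φp := (hfc.inv₀ fun u => (hfpos u).ne').mul (hgc.max continuous_const)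
  have hφm_nonneg : ∀ u, 0 ≤ φm u := fun u =>
    mul_nonneg (inv_nonneg.mpr (hfpos u).le) (le_max_right _ _)
  have hφp_le : ∀ u, φp u ≤ R⁻¹ := by
    intro u
    rcases le_or_gt (g u) 0 with h | h
    · rw [hφp_def]
      simp only
      rw [max_eq_right h, mul_zero]
      positivity
    · have h1 : R * g u ≤ f u := hfw u
      have h2 : 0 < R * g u := by positivity
      rw [hφp_def]
      simp only
      rw [max_eq_left h.le]
      have h5 : (f u)⁻¹ ≤ (R * g u)⁻¹ := inv_anti₀ h2 h1
      calc (f u)⁻¹ * g u ≤ (R * g u)⁻¹ * g u := mul_le_mul_of_nonneg_right h5 h.le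
        _ = R⁻¹ := by rw [mul_inv, mul_assoc, inv_mul_cancel₀ h.ne', mul_one]
  have hsplit : ∀ u, (f u)⁻¹ * g u = φp u - φm u := by
    intro u
    rw [hφp_def, hφm_def]
    simp only
    rw [← mul_sub, max_zero_sub_max_neg_zero_eq_self]
  have hφm_int : Integrable φm (sphMeasure n) := key _ hφmc
  have hφp_int : Integrable φp (sphMeasure n) := key _ hφpc
  have hφm_bound : ∫ u, φm u ∂(sphMeasure n) ≤ σS * R⁻¹ := by
    have h1 : ∫ u, φm u ∂(sphMeasure n) = ∫ u, φp u ∂(sphMeasure n) := by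
      have := integral_sub hφp_int hφm_int
      simp only [← hsplit] at this
      rw [hzero] at this
      linarith [this]
    rw [h1]
    calc ∫ u, φp u ∂(sphMeasure n) ≤ ∫ _u : S, R⁻¹ ∂(sphMeasure n) :=
          integral_mono hφp_int (integrable_const _) hφp_le
      _ = σS * R⁻¹ := by rw [integral_const, smul_eq_mul, hσS_def, measureReal_def]
  -- the layer cake bound
  set G : S → ℝ := fun u => Real.log R - Real.log (f u) with hG_def
  have hGc : Continuous G := continuous_const.sub (hfc.log fun u => (hfpos u).ne')
  have hGnn : ∀ u, 0 ≤ G u := by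
    intro u
    have := Real.log_le_log (hfpos u) (hfR u)
    simp only [hG_def]; linarith
  have hGint : Integrable G (sphMeasure n) := key _ hGc
  have layer : ∫ u, G u ∂(sphMeasure n)
      = ∫ t in Set.Ioi (0:ℝ), ((sphMeasure n) {u : S | t < G u}).toReal :=
    hGint.integral_eq_integral_meas_lt (ae_of_all _ hGnn)
  have htail : ∀ t ∈ Set.Ioi (0:ℝ),
      ((sphMeasure n) {u : S | t < G u}).toReal ≤ C₁ * Real.exp (-(2⁻¹) * t) := by
    intro t ht
    have ht0 : 0 < t := ht
    set β : ℝ := Real.exp (-(2⁻¹) * t) with hβ_def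
    have hβpos : 0 < β := Real.exp_pos _
    have hβ1 : β ≤ 1 := by
      rw [hβ_def, Real.exp_le_one_iff]
      linarith
    have hββ : Real.exp (-t) = β * β := by
      rw [hβ_def, ← Real.exp_add]
      congr 1
      ring
    have hsubset : {u : S | t < G u}
        ⊆ {u : S | |g u| ≤ β} ∪ {u : S | (R*β)⁻¹ ≤ φm u} := by
      intro u hu
      have hu' : t < G u := hu
      have hfu : f u < R * (β * β) := by
        have h1 : Real.log (f u) < Real.log R - t := by
          simp only [hG_def] at hu'; linarith
        have h2 : f u = Real.exp (Real.log (f u)) := (Real.exp_log (hfpos u)).symm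
        have h3 : Real.exp (Real.log R - t) = R * (β * β) := by
          rw [Real.exp_sub, Real.exp_log hR, ← hββ, Real.exp_neg, div_eq_mul_inv]
        rw [h2, ← h3]
        exact Real.exp_lt_exp.mpr h1
      by_cases hgb : |g u| ≤ β
      · exact Or.inl hgb
      · push_neg at hgb
        right
        have hgneg : g u < 0 := by
          by_contra hpos
          push_neg at hpos
          have hβg : β < g u := by rwa [abs_of_nonneg hpos] at hgb
          have h3 : R * g u ≤ f u := hfw u
          have e1 : R * β < R * g u := mul_lt_mul_of_pos_left hβg hR
          have e2 : β * β ≤ β := mul_le_of_le_one_left hβpos.le hβ1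
          have e3 : R * (β * β) ≤ R * β := mul_le_mul_of_nonneg_left e2 hR.le
          linarith
        have h4 : β ≤ -g u := by
          rw [abs_of_neg hgneg] at hgb
          exact hgb.le
        have h5 : (R * (β*β))⁻¹ ≤ (f u)⁻¹ := inv_anti₀ (hfpos u) hfu.le
        have h6 : φm u = (f u)⁻¹ * (-g u) := by
          simp only [hφm_def]
          rw [max_eq_left (by linarith : (0:ℝ) ≤ -g u)]
        show (R*β)⁻¹ ≤ φm u
        have hre : (R*(β*β))⁻¹ * β = (R*β)⁻¹ := by
          rw [mul_inv, mul_inv, mul_inv]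
          calc R⁻¹ * (β⁻¹ * β⁻¹) * β = R⁻¹ * β⁻¹ * (β⁻¹ * β) := by ring
            _ = R⁻¹ * β⁻¹ := by rw [inv_mul_cancel₀ hβpos.ne', mul_one]
        calc (R*β)⁻¹ = (R*(β*β))⁻¹ * β := hre.symm
            _ ≤ (f u)⁻¹ * (-g u) :=
              mul_le_mul h5 h4 hβpos.le (inv_nonneg.2 (hfpos u).le)
            _ = φm u := h6.symm
    have hm1 : (sphMeasure n) {u : S | t < G u}
        ≤ (sphMeasure n) {u : S | |g u| ≤ β} + (sphMeasure n) {u : S | (R*β)⁻¹ ≤ φm u} :=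
      (measure_mono hsubset).trans (measure_union_le _ _)
    have hband : ((sphMeasure n) {u : S | |g u| ≤ β}).toReal ≤ (n:ℝ) * 2^n * β :=
      band_bound hn0 w hw β hβpos.le
    have hmark : ((sphMeasure n) {u : S | (R*β)⁻¹ ≤ φm u}).toReal ≤ σS * β := by
      have h7 := mul_meas_ge_le_integral_of_nonneg (ae_of_all _ hφm_nonneg) hφm_int ((R*β)⁻¹)
      have h8 : (R*β)⁻¹ * ((sphMeasure n) {u : S | (R*β)⁻¹ ≤ φm u}).toReal ≤ σS * R⁻¹ :=
        h7.trans hφm_bound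
      have h9 : (0:ℝ) < R * β := by positivity
      have h10 := mul_le_mul_of_nonneg_right h8 h9.le
      calc ((sphMeasure n) {u : S | (R*β)⁻¹ ≤ φm u}).toReal
          = ((R*β)⁻¹ * ((sphMeasure n) {u : S | (R*β)⁻¹ ≤ φm u}).toReal) * (R*β) := by
            rw [mul_comm ((R*β)⁻¹) _, mul_assoc, inv_mul_cancel₀ h9.ne', mul_one]
        _ ≤ (σS * R⁻¹) * (R*β) := h10
        _ = σS * β := by
            field_simp
    calc ((sphMeasure n) {u : S | t < G u}).toReal
        ≤ ((sphMeasure n) {u : S | |g u| ≤ β}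
            + (sphMeasure n) {u : S | (R*β)⁻¹ ≤ φm u}).toReal :=
          ENNReal.toReal_mono
            (ENNReal.add_ne_top.2 ⟨measure_ne_top _ _, measure_ne_top _ _⟩) hm1
      _ = ((sphMeasure n) {u : S | |g u| ≤ β}).toReal
            + ((sphMeasure n) {u : S | (R*β)⁻¹ ≤ φm u}).toReal :=
          ENNReal.toReal_add (measure_ne_top _ _) (measure_ne_top _ _)
      _ ≤ (n:ℝ) * 2^n * β + σS * β := add_le_add hband hmark
      _ = C₁ * β := by rw [hC₁_def]; ring
  have hGbound : ∫ u, G u ∂(sphMeasure n) ≤ C₁ * cInt := by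
    rw [layer]
    have hint2 : IntegrableOn (fun t : ℝ => C₁ * Real.exp (-(2⁻¹) * t)) (Set.Ioi 0) :=
      (exp_neg_integrableOn_Ioi 0 (by norm_num : (0:ℝ) < 2⁻¹)).const_mul C₁
    have hmono := integral_mono_of_nonneg
      (ae_of_all _ (fun t : ℝ => ENNReal.toReal_nonneg
        (a := (sphMeasure n) {u : S | t < G u})))
      hint2
      ((ae_restrict_iff' measurableSet_Ioi).mpr (ae_of_all _ htail))
    calc ∫ t in Set.Ioi (0:ℝ), ((sphMeasure n) {u : S | t < G u}).toReal
        ≤ ∫ t in Set.Ioi (0:ℝ), C₁ * Real.exp (-(2⁻¹) * t) := hmono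
      _ = C₁ * cInt := by rw [hcInt_def, integral_const_mul]
  have hIell : Integrable (fun u : S => -Real.log (f u)) (sphMeasure n) :=
    key _ ((hfc.log fun u => (hfpos u).ne').neg)
  have hEnt : ω * Real.log a ≤ ∫ u, -Real.log (f u) ∂(sphMeasure n) := by
    have h1 : Real.log a ≤ ω⁻¹ * ∫ u, -Real.log (f u) ∂(sphMeasure n) := by
      have h2 := Real.log_le_log ha hent
      rwa [Real.log_exp] at h2
    calc ω * Real.log a ≤ ω * (ω⁻¹ * ∫ u, -Real.log (f u) ∂(sphMeasure n)) :=
          mul_le_mul_of_nonneg_left h1 hω.le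
      _ = ∫ u, -Real.log (f u) ∂(sphMeasure n) := by
          rw [← mul_assoc, mul_inv_cancel₀ hω.ne', one_mul]
  have hsum : ∫ u, -Real.log (f u) ∂(sphMeasure n)
      = (∫ u, G u ∂(sphMeasure n)) - σS * Real.log R := by
    have h1 : (fun u : S => -Real.log (f u)) = fun u => G u - Real.log R := by
      funext u
      simp only [hG_def]
      ring
    rw [h1, integral_sub hGint (integrable_const _), integral_const, smul_eq_mul, hσS_def, measureReal_def]
  have hfinal : σS * Real.log R ≤ C₁ * cInt + ω * |Real.log a| := by
    rw [hsum] at hEnt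
    have h2 : -(ω * Real.log a) ≤ ω * |Real.log a| := by
      rw [← mul_neg]
      exact mul_le_mul_of_nonneg_left (neg_le_abs _) hω.le
    linarith
  have hlogR : Real.log R ≤ (C₁ * cInt + ω * |Real.log a|) / σS := by
    rw [le_div_iff₀ hσS]
    linarith
  have hRle : R ≤ Real.exp ((C₁ * cInt + ω * |Real.log a|) / σS) := by
    calc R = Real.exp (Real.log R) := (Real.exp_log hR).symm
      _ ≤ _ := Real.exp_le_exp.mpr hlogR
  calc Metric.diam K ≤ 2 * R := hdiam
    _ ≤ 2 * Real.exp ((C₁ * cInt + ω * |Real.log a|) / σS) := by linarith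
end
end
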